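/- Let k > 0 and R > 0. Suppose w : [0,1] → ℝ is four times continuously differentiable, T : [0,1] → ℝ is continuous, and they satisfy w''''(z) − 2k² w''(z) + k⁴ w(z) = R k² T(z) for all z ∈ [0,1], together with the stress-free boundary conditions w(0) = w(1) = 0 and w''(0) = w''(1) = 0. Then ∫₀¹ w(z) T(z) dz = (1/(R k²)) ∫₀¹ (w''(z) − k² w(z))² dz. -/

import Mathlib

open MeasureTheory

/-- Second pseudo-vorticity estimate (Lemma 2 of the paper, after Whitehead–Doering 2012):
if `w'''' - 2k²w'' + k⁴w = Rk²T` on `[0,1]` with stress-free boundary conditions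
`w(0) = w(1) = w''(0) = w''(1) = 0`, then `∫₀¹ wT = (1/(Rk²)) ∫₀¹ (w'' - k²w)²`. -/
theorem wT_pseudo_vorticity_identity_stress_free
    (k R : ℝ) (hk : 0 < k) (hR : 0 < R)
    (w T : ℝ → ℝ) (hw : ContDiff ℝ 4 w) (hT : Continuous T)
    (hode : ∀ z ∈ Set.Icc (0:ℝ) 1,
      iteratedDeriv 4 w z - 2 * k^2 * iteratedDeriv 2 w z + k^4 * w z = R * k^2 * T z)
    (hw0 : w 0 = 0) (hw1 : w 1 = 0)
    (hw''0 : iteratedDeriv 2 w 0 = 0) (hw''1 : iteratedDeriv 2 w 1 = 0) :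
    (∫ z in (0:ℝ)..1, w z * T z) =
      (1 / (R * k^2)) * ∫ z in (0:ℝ)..1, (iteratedDeriv 2 w z - k^2 * w z)^2 := by
  have hRk : R * k^2 ≠ 0 := by positivity
  have hc : ∀ i : ℕ, i ≤ 4 → Continuous (iteratedDeriv i w) := fun i hi =>
    hw.continuous_iteratedDeriv i (by exact_mod_cast hi)
  have hd : ∀ i : ℕ, i < 4 → ∀ x : ℝ,
      HasDerivAt (iteratedDeriv i w) (iteratedDeriv (i+1) w x) x := by
    intro i hi x
    have h := (hw.differentiable_iteratedDeriv i (by exact_mod_cast hi)) x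
    simpa [iteratedDeriv_succ] using h.hasDerivAt
  have hcw : Continuous w := hw.continuous
  have hc1 := hc 1 (by norm_num)
  have hc2 := hc 2 (by norm_num)
  have hc3 := hc 3 (by norm_num)
  have hc4 := hc 4 le_rfl
  -- IBP 1 : ∫ w * w'''' = - ∫ w' * w'''
  have ibp1 : ∫ z in (0:ℝ)..1, w z * iteratedDeriv 4 w z
      = - ∫ z in (0:ℝ)..1, iteratedDeriv 1 w z * iteratedDeriv 3 w z := by
    have h := intervalIntegral.integral_mul_deriv_eq_deriv_mul
      (u := w) (u' := iteratedDeriv 1 w) (v := iteratedDeriv 3 w) (v' := iteratedDeriv 4 w)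
      (fun x _ => by simpa [iteratedDeriv_zero] using hd 0 (by norm_num) x)
      (fun x _ => hd 3 (by norm_num) x)
      (hc1.intervalIntegrable 0 1)
      (hc4.intervalIntegrable 0 1)
    rw [h, hw0, hw1]; ring
  -- IBP 2 : ∫ w' * w''' = - ∫ (w'')²
  have ibp2 : ∫ z in (0:ℝ)..1, iteratedDeriv 1 w z * iteratedDeriv 3 w z
      = - ∫ z in (0:ℝ)..1, iteratedDeriv 2 w z * iteratedDeriv 2 w z := by
    have h := intervalIntegral.integral_mul_deriv_eq_deriv_mul
      (u := iteratedDeriv 1 w) (u' := iteratedDeriv 2 w)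
      (v := iteratedDeriv 2 w) (v' := iteratedDeriv 3 w)
      (fun x _ => hd 1 (by norm_num) x)
      (fun x _ => hd 2 (by norm_num) x)
      (hc2.intervalIntegrable 0 1)
      (hc3.intervalIntegrable 0 1)
    rw [h, hw''0, hw''1]; ring
  -- IBP 3 : ∫ w * w'' = - ∫ (w')²
  have ibp3 : ∫ z in (0:ℝ)..1, w z * iteratedDeriv 2 w z
      = - ∫ z in (0:ℝ)..1, iteratedDeriv 1 w z * iteratedDeriv 1 w z := by
    have h := intervalIntegral.integral_mul_deriv_eq_deriv_mul
      (u := w) (u' := iteratedDeriv 1 w)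
      (v := iteratedDeriv 1 w) (v' := iteratedDeriv 2 w)
      (fun x _ => by simpa [iteratedDeriv_zero] using hd 0 (by norm_num) x)
      (fun x _ => hd 1 (by norm_num) x)
      (hc1.intervalIntegrable 0 1)
      (hc2.intervalIntegrable 0 1)
    rw [h, hw0, hw1]; ring
  -- use the ODE
  have key : ∫ z in (0:ℝ)..1, w z * (R * k^2 * T z)
      = ∫ z in (0:ℝ)..1, w z *
        (iteratedDeriv 4 w z - 2 * k^2 * iteratedDeriv 2 w z + k^4 * w z) := by
    apply intervalIntegral.integral_congr
    intro z hz
    rw [Set.uIcc_of_le (by norm_num : (0:ℝ) ≤ 1)] at hz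
    dsimp only
    rw [hode z hz]
  -- linearity on the left
  have keyL : ∫ z in (0:ℝ)..1, w z * (R * k^2 * T z)
      = (R * k^2) * ∫ z in (0:ℝ)..1, w z * T z := by
    rw [← intervalIntegral.integral_const_mul]
    apply intervalIntegral.integral_congr
    intro z _; ring
  -- linearity on the right
  have keyR : ∫ z in (0:ℝ)..1, w z *
        (iteratedDeriv 4 w z - 2 * k^2 * iteratedDeriv 2 w z + k^4 * w z)
      = (∫ z in (0:ℝ)..1, w z * iteratedDeriv 4 w z)
        - 2 * k^2 * (∫ z in (0:ℝ)..1, w z * iteratedDeriv 2 w z)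
        + k^4 * (∫ z in (0:ℝ)..1, w z * w z) := by
    rw [← intervalIntegral.integral_const_mul, ← intervalIntegral.integral_const_mul,
      ← intervalIntegral.integral_sub
        (show IntervalIntegrable (fun x => w x * iteratedDeriv 4 w x) volume 0 1 from
          (hcw.mul hc4).intervalIntegrable 0 1)
        (show IntervalIntegrable (fun x => 2 * k^2 * (w x * iteratedDeriv 2 w x)) volume 0 1 from
          (continuous_const.mul (hcw.mul hc2)).intervalIntegrable 0 1),
      ← intervalIntegral.integral_add
        (show IntervalIntegrable (fun x => w x * iteratedDeriv 4 w x
            - 2 * k^2 * (w x * iteratedDeriv 2 w x)) volume 0 1 from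
          ((hcw.mul hc4).sub (continuous_const.mul (hcw.mul hc2))).intervalIntegrable 0 1)
        (show IntervalIntegrable (fun x => k^4 * (w x * w x)) volume 0 1 from
          (continuous_const.mul (hcw.mul hcw)).intervalIntegrable 0 1)]
    apply intervalIntegral.integral_congr
    intro z _; ring
  -- expand the square
  have exp2 : ∫ z in (0:ℝ)..1, (iteratedDeriv 2 w z - k^2 * w z)^2
      = (∫ z in (0:ℝ)..1, iteratedDeriv 2 w z * iteratedDeriv 2 w z)
        - 2 * k^2 * (∫ z in (0:ℝ)..1, w z * iteratedDeriv 2 w z)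
        + k^4 * (∫ z in (0:ℝ)..1, w z * w z) := by
    rw [← intervalIntegral.integral_const_mul, ← intervalIntegral.integral_const_mul,
      ← intervalIntegral.integral_sub
        (show IntervalIntegrable (fun x => iteratedDeriv 2 w x * iteratedDeriv 2 w x) volume 0 1 from
          (hc2.mul hc2).intervalIntegrable 0 1)
        (show IntervalIntegrable (fun x => 2 * k^2 * (w x * iteratedDeriv 2 w x)) volume 0 1 from
          (continuous_const.mul (hcw.mul hc2)).intervalIntegrable 0 1),
      ← intervalIntegral.integral_add
        (show IntervalIntegrable (fun x => iteratedDeriv 2 w x * iteratedDeriv 2 w x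
            - 2 * k^2 * (w x * iteratedDeriv 2 w x)) volume 0 1 from
          ((hc2.mul hc2).sub (continuous_const.mul (hcw.mul hc2))).intervalIntegrable 0 1)
        (show IntervalIntegrable (fun x => k^4 * (w x * w x)) volume 0 1 from
          (continuous_const.mul (hcw.mul hcw)).intervalIntegrable 0 1)]
    apply intervalIntegral.integral_congr
    intro z _; ring
  have main : (R * k^2) * ∫ z in (0:ℝ)..1, w z * T z
      = ∫ z in (0:ℝ)..1, (iteratedDeriv 2 w z - k^2 * w z)^2 := by
    rw [← keyL, key, keyR, exp2, ibp1, ibp2, ibp3]; ring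
  field_simp
  linarith [main]
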